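/- Let Φ = A_n, realized with simple roots α_i = ε_{i-1} − ε_i in the hyperplane of ℝ^{n+1} of coordinate-sum zero. Suppose ω is in the Weyl group orbit of the fundamental coweight ω_k^∨ and satisfies (ω_j^∨, ω) = (ω_j^∨, ω_k^∨) for some j < k. Then there exists w in the Weyl group W ≅ S_{n+1} fixing all of ω_1^∨,…,ω_j^∨ such that ω = w·ω_k^∨. -/

import Mathlib

open scoped RealInnerProductSpace

/-- The fundamental coweight `ω_j^∨ = (ε_0 + ⋯ + ε_{j-1}) - (j/(n+1)) Σ_{i=0}^n ε_i` of the
root system `A_n` realized in the sum-zero hyperplane of `ℝ^{n+1}`. -/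
noncomputable def fundCoweightA (n j : ℕ) : EuclideanSpace ℝ (Fin (n + 1)) :=
  WithLp.toLp 2 (fun i : Fin (n + 1) => (if (i : ℕ) < j then 1 else 0) - (j : ℝ) / (n + 1))

/-- The action of the Weyl group `W = S_{n+1}` of `A_n` on `ℝ^{n+1}` by permuting the
coordinates. -/
def permAct {n : ℕ} (σ : Equiv.Perm (Fin (n + 1))) (v : EuclideanSpace ℝ (Fin (n + 1))) :
    EuclideanSpace ℝ (Fin (n + 1)) :=
  WithLp.toLp 2 (fun i => v (σ i))

lemma sum_ind (n m : ℕ) (hm : m ≤ n + 1) :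
    ∑ i : Fin (n + 1), (if (i : ℕ) < m then (1 : ℝ) else 0) = m := by
  rw [Fin.sum_univ_eq_sum_range (fun i => if i < m then (1:ℝ) else 0)]
  have : ∀ i ∈ Finset.range (n+1), (if i < m then (1:ℝ) else 0)
      = if i ∈ Finset.range m then (1:ℝ) else 0 := by
    intro i _; simp [Finset.mem_range]
  rw [Finset.sum_congr rfl this, Finset.sum_ite_mem]
  have : Finset.range (n+1) ∩ Finset.range m = Finset.range m := by
    ext x; simp [Finset.mem_range]; omega
  simp [this]

lemma inner_comp (n j k : ℕ) (hj : j ≤ n + 1) (hk : k ≤ n + 1)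
    (σ : Equiv.Perm (Fin (n + 1))) :
    ⟪fundCoweightA n j, permAct σ (fundCoweightA n k)⟫ =
      (∑ i : Fin (n + 1), if (i : ℕ) < j ∧ ((σ i : ℕ)) < k then (1 : ℝ) else 0)
        - (j : ℝ) * k / (n + 1) := by
  have hn : ((n : ℝ) + 1) ≠ 0 := by positivity
  simp only [PiLp.inner_apply, RCLike.inner_apply, conj_trivial, fundCoweightA, permAct, PiLp.toLp_apply]
  have expand : ∀ i : Fin (n+1),
      ((if (i:ℕ) < j then (1:ℝ) else 0) - (j:ℝ)/(n+1)) *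
        ((if ((σ i : ℕ)) < k then (1:ℝ) else 0) - (k:ℝ)/(n+1))
      = (if (i:ℕ) < j ∧ ((σ i : ℕ)) < k then (1:ℝ) else 0)
        - ((k:ℝ)/(n+1)) * (if (i:ℕ) < j then (1:ℝ) else 0)
        - ((j:ℝ)/(n+1)) * (if ((σ i : ℕ)) < k then (1:ℝ) else 0)
        + ((j:ℝ)/(n+1)) * ((k:ℝ)/(n+1)) := by
    intro i
    by_cases h1 : (i:ℕ) < j <;> by_cases h2 : ((σ i : ℕ)) < k <;> simp [h1, h2] <;> ring
  rw [Finset.sum_congr rfl (fun i _ => (mul_comm _ _).trans (expand i))]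
  rw [Finset.sum_add_distrib, Finset.sum_sub_distrib, Finset.sum_sub_distrib,
    ← Finset.mul_sum, ← Finset.mul_sum, Finset.sum_const]
  have h1 : ∑ i : Fin (n+1), (if (i:ℕ) < j then (1:ℝ) else 0) = j := sum_ind n j hj
  have h2 : ∑ i : Fin (n+1), (if ((σ i : ℕ)) < k then (1:ℝ) else 0) = k := by
    exact (Fintype.sum_bijective σ σ.bijective _
      (fun x : Fin (n+1) => if (x:ℕ) < k then (1:ℝ) else 0) (fun x => rfl)).trans
      (sum_ind n k hk)
  rw [h1, h2]
  simp only [Finset.card_univ, Fintype.card_fin, nsmul_eq_mul]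
  push_cast
  field_simp
  ring

lemma exists_tau (n k : ℕ) (hk : k ≤ n + 1) (σ : Equiv.Perm (Fin (n + 1))) :
    ∀ j : ℕ, j ≤ k → (∀ i : Fin (n + 1), (i : ℕ) < j → ((σ i : ℕ)) < k) →
    ∃ τ : Equiv.Perm (Fin (n + 1)),
      (∀ i : Fin (n + 1), (i : ℕ) < j → τ (σ i) = i) ∧
      (∀ x : Fin (n + 1), ((τ x : ℕ)) < k ↔ (x : ℕ) < k) := by
  intro j
  induction j with
  | zero => exact fun _ _ => ⟨1, by simp, by simp⟩
  | succ m ih =>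
    intro hjk hσ
    obtain ⟨τ, h1, h2⟩ := ih (Nat.le_of_succ_le hjk) (fun i hi => hσ i (Nat.lt_succ_of_lt hi))
    have hmn : m < n + 1 := by omega
    set m' : Fin (n+1) := ⟨m, hmn⟩ with hm'
    set a : Fin (n+1) := τ (σ m') with ha
    have hak : (a : ℕ) < k := (h2 _).mpr (hσ m' (by simp [hm']))
    have hmk : (m' : ℕ) < k := by simp [hm']; omega
    refine ⟨τ.trans (Equiv.swap a m'), ?_, ?_⟩
    · intro i hi
      simp only [Equiv.trans_apply]
      rcases Nat.lt_succ_iff_lt_or_eq.mp hi with h | h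
      · have hne1 : i ≠ m' := by
          intro he; rw [he] at h; simp [hm'] at h
        have hne2 : i ≠ a := by
          intro he
          have : τ (σ i) = τ (σ m') := by rw [h1 i h, he, ha]
          have : i = m' := σ.injective (τ.injective this)
          exact hne1 this
        rw [h1 i h, Equiv.swap_apply_of_ne_of_ne hne2 hne1]
      · have : i = m' := Fin.ext h
        rw [this, ← ha, Equiv.swap_apply_left]
    · intro x
      simp only [Equiv.trans_apply]
      rcases eq_or_ne (τ x) a with h | h
      · rw [h, Equiv.swap_apply_left]
        rw [← h2 x, h]
        exact iff_of_true hmk hak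
      · rcases eq_or_ne (τ x) m' with h' | h'
        · rw [h', Equiv.swap_apply_right, ← h2 x, h']
          exact iff_of_true hak hmk
        · rw [Equiv.swap_apply_of_ne_of_ne h h', h2]

/-- (Type `A_n`.)  If `ω` lies in the Weyl group orbit of the fundamental coweight `ω_k^∨`
and `(ω_j^∨, ω) = (ω_j^∨, ω_k^∨)` for some `j < k`, then `ω = w·ω_k^∨` for some `w ∈ S_{n+1}`
fixing all of `ω_1^∨, …, ω_j^∨`. -/
theorem stmt10 (n j k : ℕ) (hj : 1 ≤ j) (hjk : j < k) (hk : k ≤ n)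
    (ω : EuclideanSpace ℝ (Fin (n + 1)))
    (horb : ∃ σ : Equiv.Perm (Fin (n + 1)), ω = permAct σ (fundCoweightA n k))
    (hip : ⟪fundCoweightA n j, ω⟫ = ⟪fundCoweightA n j, fundCoweightA n k⟫) :
    ∃ w : Equiv.Perm (Fin (n + 1)),
      (∀ j' : ℕ, 1 ≤ j' → j' ≤ j → permAct w (fundCoweightA n j') = fundCoweightA n j') ∧
      ω = permAct w (fundCoweightA n k) := by
  obtain ⟨σ, hσω⟩ := horb
  have hjn : j ≤ n + 1 := by omega
  have hkn : k ≤ n + 1 := by omega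
  -- turn hip into a statement about sums of indicators
  have hone : fundCoweightA n k = permAct (1 : Equiv.Perm (Fin (n+1))) (fundCoweightA n k) := rfl
  rw [hσω, inner_comp n j k hjn hkn σ, hone, inner_comp n j k hjn hkn 1] at hip
  have hsum : (∑ i : Fin (n + 1), if (i : ℕ) < j ∧ ((σ i : ℕ)) < k then (1 : ℝ) else 0)
      = ∑ i : Fin (n + 1), if (i : ℕ) < j ∧ (((1 : Equiv.Perm (Fin (n+1))) i : ℕ)) < k
        then (1 : ℝ) else 0 := by linarith
  -- each term on the left is ≤ the corresponding one on the right
  have hle : ∀ i ∈ Finset.univ (α := Fin (n+1)),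
      (if (i : ℕ) < j ∧ ((σ i : ℕ)) < k then (1 : ℝ) else 0) ≤
      (if (i : ℕ) < j ∧ (((1 : Equiv.Perm (Fin (n+1))) i : ℕ)) < k then (1 : ℝ) else 0) := by
    intro i _
    simp only [Equiv.Perm.one_apply]
    by_cases h1 : (i : ℕ) < j
    · have : (i : ℕ) < k := lt_of_lt_of_le (lt_of_lt_of_le h1 hjk.le) le_rfl
      simp only [h1, this, and_true, true_and]
      by_cases h2 : ((σ i : ℕ)) < k <;> simp [h2]
    · simp [h1]
  have hterm := (Finset.sum_eq_sum_iff_of_le hle).mp hsum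
  have hσk : ∀ i : Fin (n + 1), (i : ℕ) < j → ((σ i : ℕ)) < k := by
    intro i hi
    have := hterm i (Finset.mem_univ i)
    simp only [Equiv.Perm.one_apply] at this
    have hik : (i : ℕ) < k := lt_of_lt_of_le hi hjk.le
    by_contra hc
    simp [hi, hik, hc] at this
  obtain ⟨τ, hτ1, hτ2⟩ := exists_tau n k hkn σ j hjk.le hσk
  refine ⟨σ.trans τ, ?_, ?_⟩
  · -- fixes ω_{j'} for j' ≤ j
    have hfix : ∀ i : Fin (n+1), (i : ℕ) < j → (σ.trans τ) i = i := fun i hi => hτ1 i hi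
    intro j' _ hj'j
    ext i
    have hiff : (((σ.trans τ) i : ℕ)) < j' ↔ (i : ℕ) < j' := by
      constructor
      · intro hwi
        have h1 : (((σ.trans τ) i : ℕ)) < j := lt_of_lt_of_le hwi hj'j
        have h2 : (σ.trans τ) ((σ.trans τ) i) = (σ.trans τ) i := hfix _ h1
        have h3 := (σ.trans τ).injective h2
        rwa [h3] at hwi
      · intro hi
        rw [hfix i (lt_of_lt_of_le hi hj'j)]; exact hi
    simp only [Equiv.trans_apply] at hiff
    simp [permAct, fundCoweightA, hiff]
  · rw [hσω]
    ext i
    have := hτ2 (σ i)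
    simp [permAct, fundCoweightA, this]
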